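/- Any successful run of a functional two-way transducer that visits two locations at the same input position, with the same state, and with levels of equal parity, produces empty output between these two locations; consequently every input in the domain admits a successful run whose crossing sequences have length at most 2|Q| - 1. -/

import Mathlib

/-- A nondeterministic two-way word transducer: from a state, reading an input
letter, it may output a word, change state, and move right (`true`) or left
(`false`). -/
structure TWT (α β Q : Type) where
  δ : Q → α → Set (List β × Q × Bool)
  init : Set Q
  final : Set Q

/-- A run of a two-way transducer on input `u`: a sequence of `len + 1`
configurations (state and head position), each consecutive pair related by a
transition reading the letter under the head, emitting an output word and
moving the head one step right or left (never moving left from position 0). -/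
structure TWTRun {α β Q : Type} (T : TWT α β Q) (u : List α) where
  len : ℕ
  st : ℕ → Q
  pos : ℕ → ℕ
  out : ℕ → List β
  step : ∀ i < len, ∃ a d, u[pos i]? = some a ∧
    (out i, st (i + 1), d) ∈ T.δ (st i) a ∧
    pos (i + 1) = (if d then pos i + 1 else pos i - 1) ∧
    (d = false → 0 < pos i)

/-- A run is successful if it starts in an initial state at the leftmost
position and ends in a final state just past the right end of the input. -/
def TWTRun.Successful {α β Q : Type} {T : TWT α β Q} {u : List α}
    (ρ : TWTRun T u) : Prop :=
  ρ.st 0 ∈ T.init ∧ ρ.pos 0 = 0 ∧ ρ.st ρ.len ∈ T.final ∧ ρ.pos ρ.len = u.length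

/-- The output produced by a run. -/
def TWTRun.output {α β Q : Type} {T : TWT α β Q} {u : List α}
    (ρ : TWTRun T u) : List β :=
  ((List.range ρ.len).map ρ.out).flatten

/-- A two-way transducer is functional if all successful runs on a given
input produce the same output. -/
def TWT.Functional {α β Q : Type} (T : TWT α β Q) : Prop :=
  ∀ (u : List α) (ρ₁ ρ₂ : TWTRun T u),
    ρ₁.Successful → ρ₂.Successful → ρ₁.output = ρ₂.output

private lemma range'_split (s m n : ℕ) :
    List.range' s (m + n) = List.range' s m ++ List.range' (s + m) n := by
  have := List.range'_append (s := s) (m := m) (n := n) (step := 1)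
  simp only [one_mul] at this
  rw [← this]

private lemma mem_range'_iff {s n m : ℕ} : m ∈ List.range' s n ↔ s ≤ m ∧ m < s + n := by
  simp only [List.mem_range']
  constructor
  · rintro ⟨i, hi, rfl⟩; omega
  · intro h; exact ⟨m - s, by omega, by omega⟩

/-- Cutting out a loop (same state, same position) from a run yields a
shorter run, successful if the original was. -/
private lemma TWTRun.cut {α β Q : Type} {T : TWT α β Q} {u : List α}
    (ρ : TWTRun T u) (i j : ℕ) (hij : i ≤ j) (hjl : j ≤ ρ.len)
    (hst : ρ.st i = ρ.st j) (hpos : ρ.pos i = ρ.pos j) (hsucc : ρ.Successful) :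
    ∃ ρ' : TWTRun T u, ρ'.Successful ∧ ρ'.len = ρ.len - (j - i) := by
  set d := j - i with hd
  have hidj : i + d = j := by omega
  have est : ∀ m, i ≤ m → (if m ≤ i then ρ.st m else ρ.st (m + d)) = ρ.st (m + d) := by
    intro m hm
    split
    · have hmi : m = i := le_antisymm ‹_› hm
      subst hmi; rw [hidj]; exact hst
    · rfl
  have epos : ∀ m, i ≤ m → (if m ≤ i then ρ.pos m else ρ.pos (m + d)) = ρ.pos (m + d) := by
    intro m hm
    split
    · have hmi : m = i := le_antisymm ‹_› hm
      subst hmi; rw [hidj]; exact hpos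
    · rfl
  refine ⟨⟨ρ.len - d,
    fun k => if k ≤ i then ρ.st k else ρ.st (k + d),
    fun k => if k ≤ i then ρ.pos k else ρ.pos (k + d),
    fun k => if k < i then ρ.out k else ρ.out (k + d), ?_⟩, ?_, rfl⟩
  · intro k hk
    by_cases hki : k < i
    · simp only [if_pos (le_of_lt hki), if_pos (Nat.succ_le_of_lt hki), if_pos hki]
      exact ρ.step k (by omega)
    · have E2 : ρ.st (k + 1 + d) = ρ.st (k + d + 1) := by congr 1; omega
      have E3 : ρ.pos (k + 1 + d) = ρ.pos (k + d + 1) := by congr 1; omega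
      simp only [est k (by omega), epos k (by omega), if_neg hki,
        if_neg (show ¬ k + 1 ≤ i from by omega), E2, E3]
      exact ρ.step (k + d) (by omega)
  · obtain ⟨s1, s2, s3, s4⟩ := hsucc
    refine ⟨?_, ?_, ?_, ?_⟩
    · simpa using s1
    · simpa using s2
    · simp only
      split
      · have h1 : ρ.len - d = i := by omega
        have h2 : j = ρ.len := by omega
        rw [h1, hst, h2]; exact s3
      · rw [show ρ.len - d + d = ρ.len from by omega]; exact s3
    · simp only
      split
      · have h1 : ρ.len - d = i := by omega
        have h2 : j = ρ.len := by omega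
        rw [h1, hpos, h2]; exact s4
      · rw [show ρ.len - d + d = ρ.len from by omega]; exact s4

/-- Duplicating a loop (same state, same position) yields a successful run
whose output repeats the loop's output. -/
private lemma TWTRun.dup {α β Q : Type} {T : TWT α β Q} {u : List α}
    (ρ : TWTRun T u) (i j : ℕ) (hij : i ≤ j) (hjl : j ≤ ρ.len)
    (hst : ρ.st i = ρ.st j) (hpos : ρ.pos i = ρ.pos j) (hsucc : ρ.Successful) :
    ∃ ρ' : TWTRun T u, ρ'.Successful ∧
      ρ'.output = ((List.range' 0 j).map ρ.out).flatten ++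
        ((List.range' i (ρ.len - i)).map ρ.out).flatten := by
  set d := j - i with hd
  have hidj : i + d = j := by omega
  have est : ∀ m, j ≤ m → (if m ≤ j then ρ.st m else ρ.st (m - d)) = ρ.st (m - d) := by
    intro m hm
    split
    · have hmi : m = j := le_antisymm ‹_› hm
      rw [hmi, show j - d = i from by omega]; exact hst.symm
    · rfl
  have epos : ∀ m, j ≤ m → (if m ≤ j then ρ.pos m else ρ.pos (m - d)) = ρ.pos (m - d) := by
    intro m hm
    split
    · have hmi : m = j := le_antisymm ‹_› hm
      rw [hmi, show j - d = i from by omega]; exact hpos.symm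
    · rfl
  refine ⟨⟨ρ.len + d,
    fun k => if k ≤ j then ρ.st k else ρ.st (k - d),
    fun k => if k ≤ j then ρ.pos k else ρ.pos (k - d),
    fun k => if k < j then ρ.out k else ρ.out (k - d), ?_⟩, ?_, ?_⟩
  · intro k hk
    by_cases hkj : k < j
    · simp only [if_pos (le_of_lt hkj), if_pos (Nat.succ_le_of_lt hkj), if_pos hkj]
      exact ρ.step k (by omega)
    · have E2 : ρ.st (k + 1 - d) = ρ.st (k - d + 1) := by congr 1; omega
      have E3 : ρ.pos (k + 1 - d) = ρ.pos (k - d + 1) := by congr 1; omega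
      simp only [est k (by omega), epos k (by omega), if_neg hkj,
        if_neg (show ¬ k + 1 ≤ j from by omega), E2, E3]
      exact ρ.step (k - d) (by omega)
  · obtain ⟨s1, s2, s3, s4⟩ := hsucc
    refine ⟨?_, ?_, ?_, ?_⟩
    · simpa using s1
    · simpa using s2
    · simp only
      split
      · rw [show ρ.len + d = ρ.len from by omega]; exact s3
      · rw [show ρ.len + d - d = ρ.len from by omega]; exact s3
    · simp only
      split
      · rw [show ρ.len + d = ρ.len from by omega]; exact s4
      · rw [show ρ.len + d - d = ρ.len from by omega]; exact s4
  · show ((List.range (ρ.len + d)).map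
        (fun k => if k < j then ρ.out k else ρ.out (k - d))).flatten = _
    rw [List.range_eq_range', show ρ.len + d = j + (ρ.len - i) from by omega,
      range'_split 0 j (ρ.len - i), Nat.zero_add, List.map_append, List.flatten_append]
    congr 1
    · congr 1
      apply List.map_congr_left
      intro k hk
      rw [mem_range'_iff] at hk
      simp only [if_pos (show k < j from by omega)]
    · congr 1
      have hr : List.range' j (ρ.len - i) =
          List.map (fun x => d + x) (List.range' i (ρ.len - i)) := by
        rw [List.map_add_range']
        congr 1
        omega
      rw [hr, List.map_map]
      apply List.map_congr_left
      intro k hk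
      rw [mem_range'_iff] at hk
      simp only [Function.comp_apply, if_neg (show ¬ d + k < j from by omega),
        show d + k - d = k from by omega]

theorem functional_normalized_runs {α β Q : Type} [Fintype Q]
    (T : TWT α β Q) (hfun : T.Functional) :
    (∀ (u : List α) (ρ : TWTRun T u), ρ.Successful →
      ∀ i j : ℕ, 1 ≤ i → i < j → j ≤ ρ.len →
        ρ.st i = ρ.st j → ρ.pos i = ρ.pos j →
        (ρ.pos i = ρ.pos (i - 1) + 1 ↔ ρ.pos j = ρ.pos (j - 1) + 1) →
        ((List.range' i (j - i)).map ρ.out).flatten = []) ∧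
    (∀ u : List α, (∃ ρ : TWTRun T u, ρ.Successful) →
      ∃ ρ : TWTRun T u, ρ.Successful ∧
        ∀ x : ℕ,
          (((List.range (ρ.len + 1)).filter fun i => ρ.pos i == x).length)
            ≤ 2 * Fintype.card Q - 1) := by
  constructor
  · intro u ρ hsucc i j _h1 hij hjl hst hpos _hpar
    obtain ⟨ρ', hsucc', hout⟩ := ρ.dup i j (le_of_lt hij) hjl hst hpos hsucc
    have heq := hfun u ρ' ρ hsucc' hsucc
    rw [hout] at heq
    have hρout : ρ.output = ((List.range' 0 j).map ρ.out).flatten ++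
        ((List.range' j (ρ.len - j)).map ρ.out).flatten := by
      show ((List.range ρ.len).map _).flatten = _
      rw [List.range_eq_range', show ρ.len = j + (ρ.len - j) from by omega,
        range'_split 0 j (ρ.len - j), Nat.zero_add, List.map_append, List.flatten_append,
        show j + (ρ.len - j) = ρ.len from by omega]
    have hsplit : List.range' i (ρ.len - i) =
        List.range' i (j - i) ++ List.range' j (ρ.len - j) := by
      rw [show ρ.len - i = (j - i) + (ρ.len - j) from by omega,
        range'_split i (j - i) (ρ.len - j), show i + (j - i) = j from by omega]
    rw [hρout, hsplit, List.map_append, List.flatten_append] at heq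
    have hlen := congrArg List.length heq
    simp only [List.length_append] at hlen
    rw [← List.length_eq_zero_iff]
    omega
  · intro u hu
    obtain ⟨ρ0, hρ0⟩ := hu
    have hQ : 0 < Fintype.card Q := Fintype.card_pos_iff.mpr ⟨ρ0.st 0⟩
    suffices h : ∀ n : ℕ, ∀ ρ : TWTRun T u, ρ.len = n → ρ.Successful →
        ∃ ρ' : TWTRun T u, ρ'.Successful ∧
          ∀ x : ℕ,
            (((List.range (ρ'.len + 1)).filter fun i => ρ'.pos i == x).length)
              ≤ 2 * Fintype.card Q - 1 by
      exact h ρ0.len ρ0 rfl hρ0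
    intro n
    induction n using Nat.strong_induction_on with
    | _ n ih =>
      intro ρ hlen hsucc
      by_cases hb : ∀ x : ℕ,
          (((List.range (ρ.len + 1)).filter fun i => ρ.pos i == x).length)
            ≤ 2 * Fintype.card Q - 1
      · exact ⟨ρ, hsucc, hb⟩
      · push_neg at hb
        obtain ⟨x, hx⟩ := hb
        set l := (List.range (ρ.len + 1)).filter fun i => ρ.pos i == x with hl
        have hnd : l.Nodup := (List.nodup_range).filter _
        have hcard : Fintype.card Q < l.toFinset.card := by
          rw [List.toFinset_card_of_nodup hnd]
          omega
        obtain ⟨a, ha, b, hbm, hab, hstab⟩ :=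
          Finset.exists_ne_map_eq_of_card_lt_of_maps_to
            (t := (Finset.univ : Finset Q)) (by simpa using hcard)
            (f := ρ.st) (fun a _ => Finset.mem_univ (ρ.st a))
        rw [List.mem_toFinset, hl, List.mem_filter, List.mem_range, beq_iff_eq] at ha hbm
        have key : ∀ a b : ℕ, a < b → b ≤ ρ.len → ρ.st a = ρ.st b → ρ.pos a = ρ.pos b →
            ∃ ρ' : TWTRun T u, ρ'.Successful ∧
              ∀ x : ℕ,
                (((List.range (ρ'.len + 1)).filter fun i => ρ'.pos i == x).length)
                  ≤ 2 * Fintype.card Q - 1 := by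
          intro a b hab' hbl hst hpos
          obtain ⟨ρ', hs', hl'⟩ := ρ.cut a b (le_of_lt hab') hbl hst hpos hsucc
          exact ih ρ'.len (by omega) ρ' rfl hs'
        rcases lt_or_gt_of_ne hab with h | h
        · exact key a b h (by omega) hstab (by rw [ha.2, hbm.2])
        · exact key b a h (by omega) hstab.symm (by rw [ha.2, hbm.2])
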